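/- Let C be an abelian category, let v : A ⟶ B be a morphism of cochain complexes over C, and let B' be the mapping cone of the morphism (-id, v) : A ⟶ A ⊞ B, so that in degree n one has (B')^n = A^{n+1} ⊕ A^n ⊕ B^n. Then the degreewise map s : B' ⟶ B given in degree n by (a', a, b) ↦ v(a) + b (i.e., zero on the A^{n+1} summand, v on the A^n summand, and the identity on the B^n summand) is a morphism of cochain complexes and is a quasi-isomorphism. -/
import Mathlib


/-!
STATEMENT 1: With `B'` the mapping cone of `(-𝟙 A, v) : A ⟶ A ⊞ B`, whose
degree-`n` term is `A^{n+1} ⊕ (A^n ⊕ B^n)`, the degreewise map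
`(a', a, b) ↦ v a + b` (zero on the `A^{n+1}` summand coming from `inl`, and
`biprod.desc v (𝟙 B)` on the `A ⊞ B` summand coming from `inr`) is a morphism
of cochain complexes `s : B' ⟶ B`, and it is a quasi-isomorphism.
-/

open CategoryTheory Limits CochainComplex CochainComplex.HomComplex

/-- A homotopy equivalence of cochain complexes is a quasi-isomorphism. -/
theorem aux_quasiIso_of_homotopyEquiv {C : Type*} [Category C] [Abelian C]
    {K L : CochainComplex C ℤ} (e : HomotopyEquiv K L) : QuasiIso e.hom :=
  inferInstance

theorem stmt1 {C : Type*} [Category C] [Abelian C]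
    {A B : CochainComplex C ℤ} (v : A ⟶ B) :
    ∃ s : mappingCone (biprod.lift (-𝟙 A) v) ⟶ B,
      (mappingCone.inl (biprod.lift (-𝟙 A) v)).comp (Cochain.ofHom s) (add_zero (-1)) = 0 ∧
      mappingCone.inr (biprod.lift (-𝟙 A) v) ≫ s = biprod.desc v (𝟙 B) ∧
      QuasiIso s := by
  set φ : A ⟶ A ⊞ B := biprod.lift (-𝟙 A) v with hφ
  have hcomp : φ ≫ biprod.desc v (𝟙 B) = 0 := by
    simp [hφ, biprod.lift_desc]
  have heq : δ (-1) 0 (0 : Cochain A B (-1)) =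
      Cochain.ofHom (φ ≫ biprod.desc v (𝟙 B)) := by
    simp [hcomp]
  refine ⟨mappingCone.desc φ 0 (biprod.desc v (𝟙 B)) heq, ?_, ?_, ?_⟩
  · simp [mappingCone.inl_desc]
  · simp [mappingCone.inr_desc]
  · set s := mappingCone.desc φ 0 (biprod.desc v (𝟙 B)) heq with hs
    set t : B ⟶ mappingCone φ := biprod.inr ≫ mappingCone.inr φ with ht
    have hts : t ≫ s = 𝟙 B := by
      simp [ht, hs]
    -- the key morphism identity needed for the homotopy `s ≫ t ∼ 𝟙`
    have key : biprod.desc v (𝟙 B) ≫ biprod.inr = biprod.fst ≫ φ + 𝟙 (A ⊞ B) := by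
      apply biprod.hom_ext' <;> apply biprod.hom_ext <;> simp [hφ]
    have hmor : mappingCone.inr φ ≫ s ≫ t =
        biprod.fst ≫ φ ≫ mappingCone.inr φ + mappingCone.inr φ ≫ 𝟙 (mappingCone φ) := by
      rw [ht, hs, mappingCone.inr_desc_assoc, ← Category.assoc, key,
        Preadditive.add_comp, Category.id_comp, Category.comp_id, Category.assoc]
    have hst : Homotopy (s ≫ t) (𝟙 (mappingCone φ)) := by
      refine mappingCone.descHomotopy φ _ _ 0
        ((Cochain.ofHom biprod.fst).comp (mappingCone.inl φ) (zero_add (-1))) ?_ ?_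
      · rw [Cochain.ofHom_comp, ← Cochain.comp_assoc_of_second_is_zero_cochain,
          mappingCone.inl_desc]
        simp only [Cochain.zero_comp, δ_zero, zero_add]
        rw [← Cochain.comp_assoc_of_first_is_zero_cochain, ← Cochain.ofHom_comp]
        have : (φ ≫ biprod.fst : A ⟶ A) = -𝟙 A := by simp [hφ]
        rw [this]
        simp
      · rw [δ_ofHom_comp, mappingCone.δ_inl, ← Cochain.ofHom_comp,
          ← Cochain.ofHom_add]
        rw [hmor]
    exact aux_quasiIso_of_homotopyEquiv ⟨s, t, hst, Homotopy.ofEq hts⟩
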